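/- In the state-space model of the previous context, if Φ is invertible and G₁ := Cov(W_t, W_{t-1}), G₀ := Cov(W_t), then Σ_ζ = −Φ⁻¹ G₁ and Σ_ξ = G₀ − Σ_ζ − Φ Σ_ζ Φᵀ. -/

import Mathlib

open Matrix MeasureTheory

/-- Column-stacking vectorization. -/
def vecM {m n : ℕ} (M : Matrix (Fin m) (Fin n) ℝ) : Fin n × Fin m → ℝ :=
  fun p => M p.2 p.1

/-- Cross second-moment matrix `E[X Yᵀ]` of two (zero-mean) random vectors. -/
noncomputable def covM {Ω : Type*} [MeasurableSpace Ω] (μ : Measure Ω)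
    {ι κ : Type*} (X : Ω → ι → ℝ) (Y : Ω → κ → ℝ) : Matrix ι κ ℝ :=
  Matrix.of fun i j => ∫ ω, X ω i * Y ω j ∂μ

section Aux

variable {Ω : Type*} [MeasurableSpace Ω] {μ : Measure Ω}

lemma integrable_mul_of_memL2 {f g : Ω → ℝ} (hf : MemLp f 2 μ) (hg : MemLp g 2 μ) :
    Integrable (fun ω => f ω * g ω) μ := by
  refine Integrable.mono' (((hf.integrable_sq.add hg.integrable_sq).div_const 2))
    (hf.1.mul hg.1) ?_
  filter_upwards with ω
  rw [Real.norm_eq_abs, abs_mul]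
  simp only [Pi.add_apply]
  nlinarith [sq_nonneg (|f ω| - |g ω|), sq_abs (f ω), sq_abs (g ω),
    abs_nonneg (f ω), abs_nonneg (g ω)]

lemma memL2_mulVec {n : Type*} [Fintype n] (A : Matrix n n ℝ) {X : Ω → n → ℝ}
    (hX : ∀ i, MemLp (fun ω => X ω i) 2 μ) (i : n) :
    MemLp (fun ω => A.mulVec (X ω) i) 2 μ := by
  simp only [Matrix.mulVec, dotProduct]
  exact memLp_finset_sum Finset.univ (fun k _ => (hX k).const_mul (A i k))

lemma covM_add_sub_left {ι κ : Type*} (A B C : Ω → ι → ℝ) (Y : Ω → κ → ℝ)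
    (hA : ∀ i j, Integrable (fun ω => A ω i * Y ω j) μ)
    (hB : ∀ i j, Integrable (fun ω => B ω i * Y ω j) μ)
    (hC : ∀ i j, Integrable (fun ω => C ω i * Y ω j) μ) :
    covM μ (fun ω => A ω + B ω - C ω) Y = covM μ A Y + covM μ B Y - covM μ C Y := by
  ext i j
  simp only [covM, of_apply, Matrix.sub_apply, Matrix.add_apply, Pi.add_apply, Pi.sub_apply]
  simp_rw [sub_mul, add_mul]
  have h1 : Integrable (fun ω => A ω i * Y ω j + B ω i * Y ω j) μ := (hA i j).add (hB i j)
  rw [integral_sub h1 (hC i j), integral_add (hA i j) (hB i j)]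

lemma covM_add_sub_right {ι κ : Type*} (X : Ω → ι → ℝ) (A B C : Ω → κ → ℝ)
    (hA : ∀ i j, Integrable (fun ω => X ω i * A ω j) μ)
    (hB : ∀ i j, Integrable (fun ω => X ω i * B ω j) μ)
    (hC : ∀ i j, Integrable (fun ω => X ω i * C ω j) μ) :
    covM μ X (fun ω => A ω + B ω - C ω) = covM μ X A + covM μ X B - covM μ X C := by
  ext i j
  simp only [covM, of_apply, Matrix.sub_apply, Matrix.add_apply, Pi.add_apply, Pi.sub_apply]
  simp_rw [mul_sub, mul_add]
  have h1 : Integrable (fun ω => X ω i * A ω j + X ω i * B ω j) μ := (hA i j).add (hB i j)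
  rw [integral_sub h1 (hC i j), integral_add (hA i j) (hB i j)]

lemma covM_mulVec_left {n κ : Type*} [Fintype n] (A : Matrix n n ℝ)
    (X : Ω → n → ℝ) (Y : Ω → κ → ℝ)
    (h : ∀ i j, Integrable (fun ω => X ω i * Y ω j) μ) :
    covM μ (fun ω => A.mulVec (X ω)) Y = A * covM μ X Y := by
  ext i j
  simp only [covM, of_apply, Matrix.mul_apply, Matrix.mulVec, dotProduct]
  simp_rw [Finset.sum_mul, mul_assoc]
  rw [integral_finset_sum _ (fun k _ => ((h k j).const_mul (A i k)))]
  simp [integral_const_mul]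

lemma covM_mulVec_right {ι n : Type*} [Fintype n] (B : Matrix n n ℝ)
    (X : Ω → ι → ℝ) (Y : Ω → n → ℝ)
    (h : ∀ i j, Integrable (fun ω => X ω i * Y ω j) μ) :
    covM μ X (fun ω => B.mulVec (Y ω)) = covM μ X Y * Bᵀ := by
  ext i j
  simp only [covM, of_apply, Matrix.mul_apply, Matrix.mulVec, dotProduct, Matrix.transpose_apply]
  simp_rw [Finset.mul_sum, mul_left_comm]
  rw [integral_finset_sum _ (fun k _ => ((h i k).const_mul (B j k)))]
  simp [integral_const_mul, mul_comm]

lemma covM_expand {n : Type*} [Fintype n] (A B : Matrix n n ℝ)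
    (X₁ X₂ X₃ Y₁ Y₂ Y₃ : Ω → n → ℝ)
    (hX₁ : ∀ i, MemLp (fun ω => X₁ ω i) 2 μ) (hX₂ : ∀ i, MemLp (fun ω => X₂ ω i) 2 μ)
    (hX₃ : ∀ i, MemLp (fun ω => X₃ ω i) 2 μ)
    (hY₁ : ∀ i, MemLp (fun ω => Y₁ ω i) 2 μ) (hY₂ : ∀ i, MemLp (fun ω => Y₂ ω i) 2 μ)
    (hY₃ : ∀ i, MemLp (fun ω => Y₃ ω i) 2 μ) :
    covM μ (fun ω => X₁ ω + X₂ ω - A.mulVec (X₃ ω))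
           (fun ω => Y₁ ω + Y₂ ω - B.mulVec (Y₃ ω)) =
      covM μ X₁ Y₁ + covM μ X₁ Y₂ - covM μ X₁ Y₃ * Bᵀ
      + (covM μ X₂ Y₁ + covM μ X₂ Y₂ - covM μ X₂ Y₃ * Bᵀ)
      - (A * covM μ X₃ Y₁ + A * covM μ X₃ Y₂ - A * covM μ X₃ Y₃ * Bᵀ) := by
  have mAX₃ : ∀ i, MemLp (fun ω => A.mulVec (X₃ ω) i) 2 μ := memL2_mulVec A hX₃
  have mBY₃ : ∀ i, MemLp (fun ω => B.mulVec (Y₃ ω) i) 2 μ := memL2_mulVec B hY₃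
  have mY : ∀ j, MemLp (fun ω => (Y₁ ω + Y₂ ω - B.mulVec (Y₃ ω)) j) 2 μ := by
    intro j
    exact ((hY₁ j).add (hY₂ j)).sub (mBY₃ j)
  rw [covM_add_sub_left X₁ X₂ (fun ω => A.mulVec (X₃ ω)) _
        (fun i j => integrable_mul_of_memL2 (hX₁ i) (mY j))
        (fun i j => integrable_mul_of_memL2 (hX₂ i) (mY j))
        (fun i j => integrable_mul_of_memL2 (mAX₃ i) (mY j)),
      covM_add_sub_right X₁ Y₁ Y₂ (fun ω => B.mulVec (Y₃ ω))
        (fun i j => integrable_mul_of_memL2 (hX₁ i) (hY₁ j))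
        (fun i j => integrable_mul_of_memL2 (hX₁ i) (hY₂ j))
        (fun i j => integrable_mul_of_memL2 (hX₁ i) (mBY₃ j)),
      covM_add_sub_right X₂ Y₁ Y₂ (fun ω => B.mulVec (Y₃ ω))
        (fun i j => integrable_mul_of_memL2 (hX₂ i) (hY₁ j))
        (fun i j => integrable_mul_of_memL2 (hX₂ i) (hY₂ j))
        (fun i j => integrable_mul_of_memL2 (hX₂ i) (mBY₃ j)),
      covM_add_sub_right (fun ω => A.mulVec (X₃ ω)) Y₁ Y₂ (fun ω => B.mulVec (Y₃ ω))
        (fun i j => integrable_mul_of_memL2 (mAX₃ i) (hY₁ j))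
        (fun i j => integrable_mul_of_memL2 (mAX₃ i) (hY₂ j))
        (fun i j => integrable_mul_of_memL2 (mAX₃ i) (mBY₃ j)),
      covM_mulVec_right B X₁ Y₃ (fun i j => integrable_mul_of_memL2 (hX₁ i) (hY₃ j)),
      covM_mulVec_right B X₂ Y₃ (fun i j => integrable_mul_of_memL2 (hX₂ i) (hY₃ j)),
      covM_mulVec_right B (fun ω => A.mulVec (X₃ ω)) Y₃
        (fun i j => integrable_mul_of_memL2 (mAX₃ i) (hY₃ j)),
      covM_mulVec_left A X₃ Y₁ (fun i j => integrable_mul_of_memL2 (hX₃ i) (hY₁ j)),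
      covM_mulVec_left A X₃ Y₂ (fun i j => integrable_mul_of_memL2 (hX₃ i) (hY₂ j)),
      covM_mulVec_left A X₃ Y₃ (fun i j => integrable_mul_of_memL2 (hX₃ i) (hY₃ j))]

end Aux

/-- in the state-space model, with `Φ` invertible,
`G₁ = Cov(W_t, W_{t-1})` and `G₀ = Cov(W_t)` determine the noise covariances:
`Σ_ζ = −Φ⁻¹ G₁` and `Σ_ξ = G₀ − Σ_ζ − Φ Σ_ζ Φᵀ`. -/
theorem state_space_noise_cov_recovery {r₁ r₂ : ℕ}
    {Ω : Type*} [MeasurableSpace Ω] (μ : Measure Ω) [IsProbabilityMeasure μ]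
    (F Ftil ζ ξ : ℤ → Ω → Matrix (Fin r₁) (Fin r₂) ℝ)
    (Φ SigXi SigZeta : Matrix (Fin r₂ × Fin r₁) (Fin r₂ × Fin r₁) ℝ)
    (hΦ : IsUnit Φ.det)
    (hL2F : ∀ t i, MemLp (fun ω => vecM (F t ω) i) 2 μ)
    (hL2ζ : ∀ t i, MemLp (fun ω => vecM (ζ t ω) i) 2 μ)
    (hL2ξ : ∀ t i, MemLp (fun ω => vecM (ξ t ω) i) 2 μ)
    (hmeanF : ∀ t i, ∫ ω, vecM (F t ω) i ∂μ = 0)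
    (hmeanζ : ∀ t i, ∫ ω, vecM (ζ t ω) i ∂μ = 0)
    (hmeanξ : ∀ t i, ∫ ω, vecM (ξ t ω) i ∂μ = 0)
    (hobs : ∀ t ω, Ftil t ω = F t ω + ζ t ω)
    (hstate : ∀ t ω, vecM (F t ω) = Φ.mulVec (vecM (F (t - 1) ω)) + vecM (ξ t ω))
    (hζwhite : ∀ s t, s ≠ t →
      covM μ (fun ω => vecM (ζ s ω)) (fun ω => vecM (ζ t ω)) = 0)
    (hξwhite : ∀ s t, s ≠ t →
      covM μ (fun ω => vecM (ξ s ω)) (fun ω => vecM (ξ t ω)) = 0)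
    (hζξ : ∀ s t, covM μ (fun ω => vecM (ζ s ω)) (fun ω => vecM (ξ t ω)) = 0)
    (hξζ : ∀ s t, covM μ (fun ω => vecM (ξ s ω)) (fun ω => vecM (ζ t ω)) = 0)
    (hξF : ∀ t, covM μ (fun ω => vecM (ξ t ω)) (fun ω => vecM (F (t - 1) ω)) = 0)
    (hζF : ∀ t, covM μ (fun ω => vecM (ζ t ω)) (fun ω => vecM (F (t - 1) ω)) = 0)
    (hζF' : ∀ t, covM μ (fun ω => vecM (ζ (t - 1) ω)) (fun ω => vecM (F (t - 1) ω)) = 0)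
    (hSigXi : ∀ t, covM μ (fun ω => vecM (ξ t ω)) (fun ω => vecM (ξ t ω)) = SigXi)
    (hSigZeta : ∀ t, covM μ (fun ω => vecM (ζ t ω)) (fun ω => vecM (ζ t ω)) = SigZeta) :
    ∀ t,
      SigZeta = -(Φ⁻¹ *
        covM μ (fun ω => vecM (Ftil t ω) - Φ.mulVec (vecM (Ftil (t - 1) ω)))
               (fun ω => vecM (Ftil (t - 1) ω) - Φ.mulVec (vecM (Ftil (t - 2) ω))))
      ∧ SigXi =
        covM μ (fun ω => vecM (Ftil t ω) - Φ.mulVec (vecM (Ftil (t - 1) ω)))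
               (fun ω => vecM (Ftil t ω) - Φ.mulVec (vecM (Ftil (t - 1) ω)))
          - SigZeta - Φ * SigZeta * Φᵀ := by
  intro t
  have hvec : ∀ s (ω : Ω), vecM (Ftil s ω) = vecM (F s ω) + vecM (ζ s ω) := by
    intro s ω
    funext p
    simp [vecM, hobs s ω, Matrix.add_apply]
  have hW : ∀ s (ω : Ω), vecM (Ftil s ω) - Φ.mulVec (vecM (Ftil (s - 1) ω)) =
      vecM (ξ s ω) + vecM (ζ s ω) - Φ.mulVec (vecM (ζ (s - 1) ω)) := by
    intro s ω
    rw [hvec, hvec, hstate s ω, Matrix.mulVec_add]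
    abel
  have e1 : (fun ω => vecM (Ftil t ω) - Φ.mulVec (vecM (Ftil (t - 1) ω))) =
      fun ω => vecM (ξ t ω) + vecM (ζ t ω) - Φ.mulVec (vecM (ζ (t - 1) ω)) := funext (hW t)
  have e2 : (fun ω => vecM (Ftil (t - 1) ω) - Φ.mulVec (vecM (Ftil (t - 2) ω))) =
      fun ω => vecM (ξ (t - 1) ω) + vecM (ζ (t - 1) ω) - Φ.mulVec (vecM (ζ (t - 2) ω)) := by
    funext ω
    have h := hW (t - 1) ω
    rw [show t - 1 - 1 = t - 2 by ring] at h
    exact h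
  rw [e1, e2]
  have hG1 : covM μ
      (fun ω => vecM (ξ t ω) + vecM (ζ t ω) - Φ.mulVec (vecM (ζ (t - 1) ω)))
      (fun ω => vecM (ξ (t - 1) ω) + vecM (ζ (t - 1) ω) - Φ.mulVec (vecM (ζ (t - 2) ω))) =
      -(Φ * SigZeta) := by
    refine (covM_expand Φ Φ _ _ _ _ _ _ (hL2ξ t) (hL2ζ t) (hL2ζ (t - 1))
      (hL2ξ (t - 1)) (hL2ζ (t - 1)) (hL2ζ (t - 2))).trans ?_
    rw [hξwhite t (t - 1) (by omega), hξζ t (t - 1), hξζ t (t - 2),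
      hζξ t (t - 1), hζwhite t (t - 1) (by omega), hζwhite t (t - 2) (by omega),
      hζξ (t - 1) (t - 1), hSigZeta (t - 1), hζwhite (t - 1) (t - 2) (by omega)]
    simp
  have hG0 : covM μ
      (fun ω => vecM (ξ t ω) + vecM (ζ t ω) - Φ.mulVec (vecM (ζ (t - 1) ω)))
      (fun ω => vecM (ξ t ω) + vecM (ζ t ω) - Φ.mulVec (vecM (ζ (t - 1) ω))) =
      SigXi + SigZeta + Φ * SigZeta * Φᵀ := by
    refine (covM_expand Φ Φ _ _ _ _ _ _ (hL2ξ t) (hL2ζ t) (hL2ζ (t - 1))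
      (hL2ξ t) (hL2ζ t) (hL2ζ (t - 1))).trans ?_
    rw [hSigXi t, hξζ t t, hξζ t (t - 1), hζξ t t, hSigZeta t,
      hζwhite t (t - 1) (by omega), hζξ (t - 1) t, hζwhite (t - 1) t (by omega),
      hSigZeta (t - 1)]
    simp
  refine ⟨?_, ?_⟩
  · rw [hG1, Matrix.mul_neg, neg_neg, ← Matrix.mul_assoc,
      Matrix.nonsing_inv_mul Φ hΦ, Matrix.one_mul]
  · rw [hG0]
    abel
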